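/- Child Rotating Deferred Acceptance (CRDA) is justified envy-free at every time and action profile, even allowing envy by homes with no placement: there never exist a child c with μ_t(c) ≠ c and a home h such that U_c(h) > U_c(μ_t(c)) and V_h(c) > V_h(μ_t(h)) (where V_h(μ_t(h)) = 0 if h is unmatched). -/
import Mathlib


/-- A one-to-one (partial) matching between children and homes. -/
structure Matching (C H : Type) where
  toHome : C → Option H
  toChild : H → Option C
  consistent : ∀ c h, toHome c = some h ↔ toChild h = some c

/-- A dynamic matching market: cardinal utilities, arrival times, waiting costs. -/
structure Market (C H : Type) where
  U : C → H → ℝ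
  V : H → C → ℝ
  arrC : C → ℕ
  arrH : H → ℕ
  wC : ℝ
  wH : ℝ

/-- Accept/reject action profiles of homes over time. -/
abbrev Actions (H : Type) := H → ℕ → Bool

/-- A dynamic mechanism: given the homes' action profile, a matching in each period. -/
abbrev Mechanism (C H : Type) := Actions H → ℕ → Matching C H

open scoped Classical in
/-- The counterfactual profile in which home `h` rejects every placement before `t'`,
accepts at `t'`, and otherwise plays as in `a`; all other homes play as in `a`. -/
noncomputable def cfProfile {H : Type} (a : Actions H) (h : H) (t' : ℕ) : Actions H :=
  fun h' k =>
    if h' = h then (if k < t' then false else if k = t' then true else a h' k)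
    else a h' k

namespace Market

variable {C H : Type}

/-- Time-discounted utility of home `h` for child `c` at time `t`:
`V_h^t(c) = V_h(c) - (t - arrival(h)) * w_H`. -/
noncomputable def Vt (M : Market C H) (h : H) (c : C) (t : ℕ) : ℝ :=
  M.V h c - ((t : ℝ) - (M.arrH h : ℝ)) * M.wH

/-- Child `c` is active (present in the market) at time `t`:
she has arrived and no home has yet accepted a placement with her. -/
def activeC (M : Market C H) (Q : Mechanism C H) (a : Actions H) (c : C) (t : ℕ) : Prop :=
  M.arrC c ≤ t ∧ ¬ ∃ k < t, ∃ h, (Q a k).toHome c = some h ∧ a h k = true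

/-- Home `h` is active (present in the market) at time `t`:
it has arrived and has not yet accepted a placement. -/
def activeH (M : Market C H) (Q : Mechanism C H) (a : Actions H) (h : H) (t : ℕ) : Prop :=
  M.arrH h ≤ t ∧ ¬ ∃ k < t, (Q a k).toChild h ≠ none ∧ a h k = true

/-- Admissibility: the mechanism only matches agents active in the current market. -/
def feasible (M : Market C H) (Q : Mechanism C H) : Prop :=
  ∀ a t c h, (Q a t).toHome c = some h → M.activeC Q a c t ∧ M.activeH Q a h t

/-- Child `c` has been adopted (placement accepted) by time `t`. -/
def childAdopted (M : Market C H) (Q : Mechanism C H) (a : Actions H) (c : C) (t : ℕ) : Prop :=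
  ∃ k ≤ t, ∃ h, (Q a k).toHome c = some h ∧ a h k = true

/-- Home `h` has accepted a placement by time `t`. -/
def homeAccepted (M : Market C H) (Q : Mechanism C H) (a : Actions H) (h : H) (t : ℕ) : Prop :=
  ∃ k ≤ t, (Q a k).toChild h ≠ none ∧ a h k = true

/-- Justified envy-freeness at every period and action profile: no mutually matched
child and home both strictly prefer each other to their assigned partners. -/
def justifiedEnvyFree (M : Market C H) (Q : Mechanism C H) : Prop :=
  ∀ a t c h h' c', (Q a t).toHome c = some h' → (Q a t).toChild h = some c' →
    ¬ (M.U c h' < M.U c h ∧ M.V h c' < M.V h c)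

/-- Individual rationality at every period and action profile. -/
def individuallyRational (M : Market C H) (Q : Mechanism C H) : Prop :=
  ∀ a t c h, (Q a t).toHome c = some h → 0 ≤ M.U c h ∧ 0 ≤ M.V h c

/-- Patience-freeness: any placement offered at `t` is weakly better (time-discounted)
than the placement the home would receive at any later `t'` in the counterfactual in
which it rejects all placements before `t'` and accepts at `t'`. -/
noncomputable def patienceFree (M : Market C H) (Q : Mechanism C H) : Prop :=
  ∀ (a : Actions H) (t : ℕ) (h : H) (c : C), (Q a t).toChild h = some c →
    ∀ t' > t, ∀ c', (Q (cfProfile a h t') t').toChild h = some c' →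
      M.Vt h c' t' ≤ M.Vt h c t

/-- Dynamic envy-freeness: justified envy-free, patience-free, individually rational. -/
noncomputable def dynamicEnvyFree (M : Market C H) (Q : Mechanism C H) : Prop :=
  M.justifiedEnvyFree Q ∧ M.patienceFree Q ∧ M.individuallyRational Q

/-- Strict non-wastefulness: after every history and action profile there is never an
active unmatched child and an active unmatched home that find each other acceptable. -/
def strictlyNonWasteful (M : Market C H) (Q : Mechanism C H) : Prop :=
  ∀ a t, ¬ ∃ c h, M.activeC Q a c t ∧ M.activeH Q a h t ∧
    0 ≤ M.U c h ∧ 0 ≤ M.V h c ∧ (Q a t).toHome c = none ∧ (Q a t).toChild h = none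

/-- Weak non-wastefulness: when every home accepts every offered placement,
no mutually acceptable unmatched pair ever remains. -/
def weaklyNonWasteful (M : Market C H) (Q : Mechanism C H) : Prop :=
  ∀ t, ¬ ∃ c h, M.activeC Q (fun _ _ => true) c t ∧ M.activeH Q (fun _ _ => true) h t ∧
    0 ≤ M.U c h ∧ 0 ≤ M.V h c ∧
    (Q (fun _ _ => true) t).toHome c = none ∧ (Q (fun _ _ => true) t).toChild h = none

/-- The mechanism is a deterministic function of the history of markets (active sets)
and past matchings. -/
def historyDetermined (M : Market C H) (Q : Mechanism C H) : Prop :=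
  ∀ a a' t,
    (∀ k ≤ t, ∀ c, M.activeC Q a c k ↔ M.activeC Q a' c k) →
    (∀ k ≤ t, ∀ h, M.activeH Q a h k ↔ M.activeH Q a' h k) →
    (∀ k < t, Q a k = Q a' k) →
    Q a t = Q a' t

/-- `x` is the realized (true-utility, time-discounted) payoff of home `h`:
the time-discounted utility of an accepted placement, or `0` if `h` never accepts. -/
noncomputable def payoffIs (M : Market C H) (Q : Mechanism C H) (a : Actions H)
    (h : H) (x : ℝ) : Prop :=
  (∃ t c, (Q a t).toChild h = some c ∧ a h t = true ∧ x = M.Vt h c t) ∨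
  ((∀ t c, (Q a t).toChild h = some c → a h t = false) ∧ x = 0)

end Market

namespace Market

variable {C H : Type}

/-- Stability (feasibility, individual rationality and no blocking pair) of a matching
on given sets of active children and homes. -/
def IsStableOn (M : Market C H) (aC : Set C) (aH : Set H) (μ : Matching C H) : Prop :=
  (∀ c h, μ.toHome c = some h → c ∈ aC ∧ h ∈ aH ∧ 0 ≤ M.U c h ∧ 0 ≤ M.V h c) ∧
  (∀ c h, c ∈ aC → h ∈ aH → 0 ≤ M.U c h → 0 ≤ M.V h c →
    ¬ ((∀ h', μ.toHome c = some h' → M.U c h' < M.U c h) ∧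
       (∀ c', μ.toChild h = some c' → M.V h c' < M.V h c)))

end Market

namespace Market

variable {C H : Type}

/-- Characterization of the output of child-proposing Deferred Acceptance:
the child-optimal stable matching on the given sets. -/
def IsChildOptimalOn (M : Market C H) (aC : Set C) (aH : Set H) (μ : Matching C H) : Prop :=
  M.IsStableOn aC aH μ ∧
  ∀ μ', M.IsStableOn aC aH μ' → ∀ c h, μ'.toHome c = some h →
    ∃ h', μ.toHome c = some h' ∧ M.U c h ≤ M.U c h'

/-- CRDA's trigger: some home whose most recently rejected placement had
time-discounted value `prev h` gets a strictly better match in the MATCHING phase. -/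
noncomputable def crdaTrigger (M : Market C H) (prev : H → Option ℝ) (t : ℕ)
    (μM : Matching C H) : Prop :=
  ∃ h c b, μM.toChild h = some c ∧ prev h = some b ∧ b < M.Vt h c t

/-- A child is flagged for rotation: some acceptable active home is strictly preferred
to her MATCHING match, or her assigned home improves on its previously rejected placement. -/
noncomputable def crdaFlagged (M : Market C H) (aH : Set H) (prev : H → Option ℝ)
    (t : ℕ) (μM : Matching C H) (c : C) : Prop :=
  (∃ h ∈ aH, 0 ≤ M.V h c ∧ ∀ h', μM.toHome c = some h' → M.U c h' < M.U c h) ∨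
  (∃ h b, μM.toHome c = some h ∧ prev h = some b ∧ b < M.Vt h c t)

/-- The set `\hat R_C^t`: flagged or unmatched active children. -/
noncomputable def crdaHatRC (M : Market C H) (aC : Set C) (aH : Set H)
    (prev : H → Option ℝ) (t : ℕ) (μM : Matching C H) : Set C :=
  {c ∈ aC | M.crdaFlagged aH prev t μM c ∨ μM.toHome c = none}

/-- The set `R_H^t`: active homes matched to flagged children, or unmatched. -/
noncomputable def crdaRH (M : Market C H) (aC : Set C) (aH : Set H)
    (prev : H → Option ℝ) (t : ℕ) (μM : Matching C H) : Set H :=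
  {h ∈ aH | (∃ c ∈ M.crdaHatRC aC aH prev t μM, μM.toChild h = some c) ∨
    μM.toChild h = none}

/-- The set `R_C^t`: children of `\hat R_C^t` weakly below every relevant home's
previously rejected placement value. -/
noncomputable def crdaRC (M : Market C H) (aC : Set C) (aH : Set H)
    (prev : H → Option ℝ) (t : ℕ) (μM : Matching C H) : Set C :=
  {c ∈ M.crdaHatRC aC aH prev t μM |
    ∀ h ∈ M.crdaRH aC aH prev t μM, 0 ≤ M.U c h →
      ∀ b, prev h = some b → M.Vt h c t ≤ b}

/-- One period of Child Rotating Deferred Acceptance on the market given by active sets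
`aC`, `aH`, where `prev h` records the time-discounted value of home `h`'s most recently
rejected placement (if any): first child-proposing DA (`μM`); if triggered, ROTATION
re-runs child-proposing DA (`μR`) on the rotation sets, children excluded from the
rotation set become unmatched, and all other agents keep their MATCHING placements. -/
structure CRDAStep (M : Market C H) (aC : Set C) (aH : Set H)
    (prev : H → Option ℝ) (t : ℕ) where
  μM : Matching C H
  μR : Matching C H
  μ : Matching C H
  matching_opt : M.IsChildOptimalOn aC aH μM
  no_trigger : ¬ M.crdaTrigger prev t μM → μ = μM
  rot_opt : M.crdaTrigger prev t μM →
    M.IsChildOptimalOn (M.crdaRC aC aH prev t μM) (M.crdaRH aC aH prev t μM) μR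
  final_rotC : M.crdaTrigger prev t μM →
    ∀ c ∈ M.crdaRC aC aH prev t μM, μ.toHome c = μR.toHome c
  final_rotH : M.crdaTrigger prev t μM →
    ∀ h ∈ M.crdaRH aC aH prev t μM, μ.toChild h = μR.toChild h
  final_dropC : M.crdaTrigger prev t μM →
    ∀ c ∈ M.crdaHatRC aC aH prev t μM, c ∉ M.crdaRC aC aH prev t μM → μ.toHome c = none
  final_keepC : M.crdaTrigger prev t μM →
    ∀ c ∈ aC, c ∉ M.crdaHatRC aC aH prev t μM → μ.toHome c = μM.toHome c
  final_keepH : M.crdaTrigger prev t μM →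
    ∀ h ∈ aH, h ∉ M.crdaRH aC aH prev t μM → μ.toChild h = μM.toChild h

end Market

namespace Matching

variable {C H : Type}

lemma toChild_of_toHome (μ : Matching C H) {c : C} {h : H} (hch : μ.toHome c = some h) :
    μ.toChild h = some c := (μ.consistent c h).1 hch

lemma toHome_of_toChild (μ : Matching C H) {c : C} {h : H} (hch : μ.toChild h = some c) :
    μ.toHome c = some h := (μ.consistent c h).2 hch

end Matching

namespace Market

variable {C H : Type}

/-- A stable matching admits no justified envy (allowing envy toward unmatched homes). -/
lemma stable_no_envy (M : Market C H) {aC : Set C} {aH : Set H}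
    {μ : Matching C H} (St : M.IsStableOn aC aH μ) {c : C} {h : H}
    (hc : c ∈ aC) (hh : h ∈ aH) {h' : H} (hmc : μ.toHome c = some h') :
    ¬ (M.U c h' < M.U c h ∧ (μ.toChild h).elim (0 : ℝ) (M.V h) < M.V h c) := by
  rintro ⟨hU, hV⟩
  have hIR := St.1 c h' hmc
  have hVpos : 0 ≤ M.V h c := by
    cases hch : μ.toChild h with
    | none => rw [hch] at hV; exact le_of_lt hV
    | some c'' =>
        have h2 := St.1 c'' h (μ.toHome_of_toChild hch)
        rw [hch] at hV
        simp only [Option.elim_some] at hV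
        exact le_of_lt (lt_of_le_of_lt h2.2.2.2 hV)
  refine St.2 c h hc hh (le_of_lt (lt_of_le_of_lt hIR.2.2.1 hU)) hVpos ⟨?_, ?_⟩
  · intro h'' hh''
    rw [hmc] at hh''
    obtain rfl : h' = h'' := Option.some.inj hh''
    exact hU
  · intro c'' hc''
    rw [hc''] at hV
    simpa using hV

/-- Key lemma: every child rotated by CRDA weakly improves on her MATCHING placement.
Stated abstractly: if `μM` is stable on `(aC, aH)`, `μR` is child-optimal stable on
`(RC, RH)` with `RC ⊆ aC`, `RH ⊆ aH`, and every `RC`-child's `μM`-home lies in `RH`,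
then every `RC`-child matched under both weakly prefers `μR`. -/
lemma rotation_improves [Finite H] (M : Market C H)
    {aC : Set C} {aH : Set H} {RC : Set C} {RH : Set H} {μM μR : Matching C H}
    (hRCsub : RC ⊆ aC) (hRHsub : RH ⊆ aH)
    (hcl : ∀ c g, c ∈ RC → μM.toHome c = some g → g ∈ RH)
    (SM : M.IsStableOn aC aH μM) (SRopt : M.IsChildOptimalOn RC RH μR)
    (strictU : ∀ c h h', h ≠ h' → M.U c h ≠ M.U c h')
    (strictV : ∀ h c c', c ≠ c' → M.V h c ≠ M.V h c')
    {c : C} {h₀ h' : H} (hc : c ∈ RC) (hM : μM.toHome c = some h₀)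
    (hR : μR.toHome c = some h') : M.U c h₀ ≤ M.U c h' := by
  classical
  obtain ⟨SR, Ropt⟩ := SRopt
  by_contra hcon
  push_neg at hcon
  -- the set of homes strictly preferring their ROTATION child to their MATCHING child
  set Hs : Set H := {g | g ∈ RH ∧ ∃ x y, μM.toChild g = some x ∧ x ∈ RC ∧
    μR.toChild g = some y ∧ M.V g x < M.V g y} with hHsdef
  -- closure: the rotation child of a home in `Hs` has a MATCHING home in `Hs`,
  -- which she strictly prefers
  have closA : ∀ g ∈ Hs, ∀ y, μR.toChild g = some y →
      ∃ g₁, μM.toHome y = some g₁ ∧ g₁ ∈ Hs ∧ M.U y g < M.U y g₁ := by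
    intro g hg y hgy
    obtain ⟨hgRH, x, y', hgx, hxRC, hgy', hVxy⟩ := hg
    have hy'e : y' = y := Option.some.inj (hgy'.symm.trans hgy)
    rw [hy'e] at hVxy
    have hyH : μR.toHome y = some g := μR.toHome_of_toChild hgy
    have hyIR := SR.1 y g hyH
    have hyRC : y ∈ RC := hyIR.1
    have hnb := SM.2 y g (hRCsub hyRC) (hRHsub hgRH) hyIR.2.2.1 hyIR.2.2.2
    have hBM : ∀ c'', μM.toChild g = some c'' → M.V g c'' < M.V g y := by
      intro c'' hc''
      obtain rfl : x = c'' := Option.some.inj (hgx.symm.trans hc'')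
      exact hVxy
    have hAM : ¬ ∀ h'', μM.toHome y = some h'' → M.U y h'' < M.U y g :=
      fun hA => hnb ⟨hA, hBM⟩
    push_neg at hAM
    obtain ⟨g₁, hyg₁, hUge⟩ := hAM
    have hgne : g₁ ≠ g := by
      rintro rfl
      have hxy : x = y := Option.some.inj (hgx.symm.trans (μM.toChild_of_toHome hyg₁))
      rw [hxy] at hVxy
      exact lt_irrefl _ hVxy
    have hUlt : M.U y g < M.U y g₁ := lt_of_le_of_ne hUge (strictU y g g₁ (Ne.symm hgne))
    have hg₁RH : g₁ ∈ RH := hcl y g₁ hyRC hyg₁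
    have hIR2 := SM.1 y g₁ hyg₁
    have hnb2 := SR.2 y g₁ hyRC hg₁RH hIR2.2.2.1 hIR2.2.2.2
    have hAR : ∀ h'', μR.toHome y = some h'' → M.U y h'' < M.U y g₁ := by
      intro h'' hh''
      obtain rfl : g = h'' := Option.some.inj (hyH.symm.trans hh'')
      exact hUlt
    have hBR : ¬ ∀ c'', μR.toChild g₁ = some c'' → M.V g₁ c'' < M.V g₁ y :=
      fun hB => hnb2 ⟨hAR, hB⟩
    push_neg at hBR
    obtain ⟨c₂, hg₁c₂, hVge⟩ := hBR
    have hc₂ne : c₂ ≠ y := by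
      rintro rfl
      have h1 := μR.toHome_of_toChild hg₁c₂
      exact hgne (Option.some.inj (h1.symm.trans hyH))
    have hVlt : M.V g₁ y < M.V g₁ c₂ :=
      lt_of_le_of_ne hVge (strictV g₁ y c₂ (Ne.symm hc₂ne))
    exact ⟨g₁, hyg₁, ⟨hg₁RH, y, c₂, μM.toChild_of_toHome hyg₁, hyRC, hg₁c₂, hVlt⟩, hUlt⟩
  -- the induced self-map of `Hs` is injective, hence surjective
  have surj : ∀ g₁ ∈ Hs, ∃ g ∈ Hs, ∃ y, μR.toChild g = some y ∧ μM.toHome y = some g₁ := by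
    have hch : ∀ g : Hs, ∃ y g₁, μR.toChild (g : H) = some y ∧ μM.toHome y = some g₁ ∧
        g₁ ∈ Hs := by
      rintro ⟨g, hg⟩
      obtain ⟨x, y, _, _, hgy, _⟩ := hg.2
      obtain ⟨g₁, h1, h2, _⟩ := closA g hg y hgy
      exact ⟨y, g₁, hgy, h1, h2⟩
    choose yf gf hyf hgf hgfm using hch
    set f : Hs → Hs := fun g => ⟨gf g, hgfm g⟩ with hfdef
    have finj : Function.Injective f := by
      intro g g' he
      have hgg : gf g = gf g' := congrArg Subtype.val he
      have hyy : yf g = yf g' := by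
        have h1 := μM.toChild_of_toHome (hgf g)
        have h2 := μM.toChild_of_toHome (hgf g')
        rw [hgg] at h1
        exact Option.some.inj (h1.symm.trans h2)
      have hy1 := hyf g
      rw [hyy] at hy1
      exact Subtype.ext (Option.some.inj
        ((μR.toHome_of_toChild hy1).symm.trans (μR.toHome_of_toChild (hyf g'))))
    have fsurj : Function.Surjective f := Finite.surjective_of_injective finj
    intro g₁ hg₁
    obtain ⟨g, hgeq⟩ := fsurj ⟨g₁, hg₁⟩
    refine ⟨(g : H), g.2, yf g, hyf g, ?_⟩
    have : gf g = g₁ := congrArg Subtype.val hgeq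
    rw [← this]
    exact hgf g
  -- the corresponding set of children (MATCHING children of homes in `Hs`)
  set D : Set C := {d | ∃ g ∈ Hs, μM.toChild g = some d} with hDdef
  have d_home : ∀ d ∈ D, ∃ g ∈ Hs, μM.toHome d = some g := by
    rintro d ⟨g, hg, hgd⟩
    exact ⟨g, hg, μM.toHome_of_toChild hgd⟩
  have d_RC : ∀ d ∈ D, d ∈ RC := by
    rintro d ⟨g, hg, hgd⟩
    obtain ⟨_, x, y, hgx, hxRC, _, _⟩ := hg
    obtain rfl : x = d := Option.some.inj (hgx.symm.trans hgd)
    exact hxRC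
  have d3 : ∀ g ∈ Hs, ∀ y, μR.toChild g = some y → y ∈ D := by
    intro g hg y hgy
    obtain ⟨g₁, h1, h2, _⟩ := closA g hg y hgy
    exact ⟨g₁, h2, μM.toChild_of_toHome h1⟩
  have d4 : ∀ d ∈ D, ∀ g, μR.toHome d = some g → g ∈ Hs := by
    rintro d ⟨g₁, hg₁, hg₁d⟩ g hdg
    obtain ⟨g₂, hg₂, y, hg₂y, hyg₁⟩ := surj g₁ hg₁
    obtain rfl : y = d := Option.some.inj ((μM.toChild_of_toHome hyg₁).symm.trans hg₁d)
    have h1 := μR.toHome_of_toChild hg₂y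
    obtain rfl : g = g₂ := Option.some.inj (hdg.symm.trans h1)
    exact hg₂
  -- the swap matching: children of `D` take their MATCHING homes, others ROTATION
  set μ2 : Matching C H :=
    { toHome := fun d => if d ∈ D then μM.toHome d else μR.toHome d
      toChild := fun g => if g ∈ Hs then μM.toChild g else μR.toChild g
      consistent := by
        intro d g
        show (if d ∈ D then μM.toHome d else μR.toHome d) = some g ↔
          (if g ∈ Hs then μM.toChild g else μR.toChild g) = some d
        constructor
        · intro hdg
          by_cases hd : d ∈ D
          · rw [if_pos hd] at hdg
            have hgHs : g ∈ Hs := by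
              obtain ⟨g', hg', hdg'⟩ := d_home d hd
              obtain rfl : g = g' := Option.some.inj (hdg.symm.trans hdg')
              exact hg'
            rw [if_pos hgHs]
            exact μM.toChild_of_toHome hdg
          · rw [if_neg hd] at hdg
            have hgn : g ∉ Hs := fun hgHs => hd (d3 g hgHs d (μR.toChild_of_toHome hdg))
            rw [if_neg hgn]
            exact μR.toChild_of_toHome hdg
        · intro hgd
          by_cases hg : g ∈ Hs
          · rw [if_pos hg] at hgd
            have hdD : d ∈ D := ⟨g, hg, hgd⟩
            rw [if_pos hdD]
            exact μM.toHome_of_toChild hgd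
          · rw [if_neg hg] at hgd
            have hdn : d ∉ D := fun hdD => hg (d4 d hdD g (μR.toHome_of_toChild hgd))
            rw [if_neg hdn]
            exact μR.toHome_of_toChild hgd } with hμ2def
  have hμ2Home_mem : ∀ d ∈ D, μ2.toHome d = μM.toHome d := by
    intro d hd
    show (if d ∈ D then μM.toHome d else μR.toHome d) = μM.toHome d
    rw [if_pos hd]
  have hμ2Home_nonmem : ∀ d, d ∉ D → μ2.toHome d = μR.toHome d := by
    intro d hd
    show (if d ∈ D then μM.toHome d else μR.toHome d) = μR.toHome d
    rw [if_neg hd]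
  have hμ2Child_mem : ∀ g ∈ Hs, μ2.toChild g = μM.toChild g := by
    intro g hg
    show (if g ∈ Hs then μM.toChild g else μR.toChild g) = μM.toChild g
    rw [if_pos hg]
  have hμ2Child_nonmem : ∀ g, g ∉ Hs → μ2.toChild g = μR.toChild g := by
    intro g hg
    show (if g ∈ Hs then μM.toChild g else μR.toChild g) = μR.toChild g
    rw [if_neg hg]
  -- the swap matching is stable on the rotation market
  have St2 : M.IsStableOn RC RH μ2 := by
    constructor
    · intro d g hdg
      by_cases hd : d ∈ D
      · rw [hμ2Home_mem d hd] at hdg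
        have hIR := SM.1 d g hdg
        have hgHs : g ∈ Hs := by
          obtain ⟨g', hg', hdg'⟩ := d_home d hd
          obtain rfl : g = g' := Option.some.inj (hdg.symm.trans hdg')
          exact hg'
        exact ⟨d_RC d hd, hgHs.1, hIR.2.2⟩
      · rw [hμ2Home_nonmem d hd] at hdg
        exact SR.1 d g hdg
    · rintro cs hs hcs hhs hU0 hV0 ⟨HA, HB⟩
      by_cases hg : hs ∈ Hs
      · obtain ⟨hsRH, x, y, hx, hxRC, hy, hVxy⟩ := hg
        have hgHs : hs ∈ Hs := ⟨hsRH, x, y, hx, hxRC, hy, hVxy⟩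
        have hVx : M.V hs x < M.V hs cs := by
          refine HB x ?_
          rw [hμ2Child_mem hs hgHs]
          exact hx
        by_cases hcD : cs ∈ D
        · obtain ⟨g₁, hg₁Hs, hcg₁⟩ := d_home cs hcD
          have hU1 : M.U cs g₁ < M.U cs hs := by
            refine HA g₁ ?_
            rw [hμ2Home_mem cs hcD]
            exact hcg₁
          refine SM.2 cs hs (hRCsub hcs) (hRHsub hhs) hU0 hV0 ⟨?_, ?_⟩
          · intro h'' hh''
            obtain rfl : g₁ = h'' := Option.some.inj (hcg₁.symm.trans hh'')
            exact hU1
          · intro c'' hc''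
            obtain rfl : x = c'' := Option.some.inj (hx.symm.trans hc'')
            exact hVx
        · have HA' : ∀ h'', μR.toHome cs = some h'' → M.U cs h'' < M.U cs hs := by
            intro h'' hh''
            refine HA h'' ?_
            rw [hμ2Home_nonmem cs hcD]
            exact hh''
          have hnbM := SM.2 cs hs (hRCsub hcs) (hRHsub hhs) hU0 hV0
          have hAM : ¬ ∀ h'', μM.toHome cs = some h'' → M.U cs h'' < M.U cs hs := by
            refine fun hA => hnbM ⟨hA, ?_⟩
            intro c'' hc''
            obtain rfl : x = c'' := Option.some.inj (hx.symm.trans hc'')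
            exact hVx
          push_neg at hAM
          obtain ⟨hp, hchp, hple⟩ := hAM
          have hpne : hp ≠ hs := by
            rintro rfl
            have : x = cs := Option.some.inj (hx.symm.trans (μM.toChild_of_toHome hchp))
            exact hcD ⟨hp, hgHs, this ▸ hx⟩
          have hplt : M.U cs hs < M.U cs hp :=
            lt_of_le_of_ne hple (strictU cs hs hp (Ne.symm hpne))
          have hpRH : hp ∈ RH := hcl cs hp hcs hchp
          have hIRp := SM.1 cs hp hchp
          have hnbR := SR.2 cs hp hcs hpRH hIRp.2.2.1 hIRp.2.2.2
          have hBRp : ¬ ∀ c'', μR.toChild hp = some c'' → M.V hp c'' < M.V hp cs := by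
            refine fun hB => hnbR ⟨fun h'' hh'' => lt_trans (HA' h'' hh'') hplt, hB⟩
          push_neg at hBRp
          obtain ⟨cp, hpcp, hcple⟩ := hBRp
          have hcpne : cp ≠ cs := by
            rintro rfl
            exact absurd (HA' hp (μR.toHome_of_toChild hpcp)) (not_lt.mpr (le_of_lt hplt))
          have hVplt : M.V hp cs < M.V hp cp :=
            lt_of_le_of_ne hcple (strictV hp cs cp (Ne.symm hcpne))
          exact hcD ⟨hp, ⟨hpRH, cs, cp, μM.toChild_of_toHome hchp, hcs, hpcp, hVplt⟩,
            μM.toChild_of_toHome hchp⟩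
      · have HB' : ∀ c'', μR.toChild hs = some c'' → M.V hs c'' < M.V hs cs := by
          intro c'' hc''
          refine HB c'' ?_
          rw [hμ2Child_nonmem hs hg]
          exact hc''
        have HA'' : ∀ h'', μR.toHome cs = some h'' → M.U cs h'' < M.U cs hs := by
          intro h'' hh''
          by_cases hcD : cs ∈ D
          · obtain ⟨g₁, hg₁Hs, hcg₁⟩ := d_home cs hcD
            have hU1 : M.U cs g₁ < M.U cs hs := by
              refine HA g₁ ?_
              rw [hμ2Home_mem cs hcD]
              exact hcg₁
            have hh''Hs : h'' ∈ Hs := d4 cs hcD h'' hh''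
            obtain ⟨g₁', hcg₁', _, hUlt⟩ := closA h'' hh''Hs cs (μR.toChild_of_toHome hh'')
            obtain rfl : g₁' = g₁ := Option.some.inj (hcg₁'.symm.trans hcg₁)
            exact lt_trans hUlt hU1
          · refine HA h'' ?_
            rw [hμ2Home_nonmem cs hcD]
            exact hh''
        exact SR.2 cs hs hcs hhs hU0 hV0 ⟨HA'', HB'⟩
  -- conclude: `c` lies in `D`, so child-optimality of `μR` over `μ2` gives a contradiction
  have h₀RH : h₀ ∈ RH := hcl c h₀ hc hM
  have hIRM := SM.1 c h₀ hM
  have hnbR := SR.2 c h₀ hc h₀RH hIRM.2.2.1 hIRM.2.2.2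
  have hAR : ∀ h'', μR.toHome c = some h'' → M.U c h'' < M.U c h₀ := by
    intro h'' hh''
    obtain rfl : h' = h'' := Option.some.inj (hR.symm.trans hh'')
    exact hcon
  have hBR : ¬ ∀ c'', μR.toChild h₀ = some c'' → M.V h₀ c'' < M.V h₀ c :=
    fun hB => hnbR ⟨hAR, hB⟩
  push_neg at hBR
  obtain ⟨y₀, h₀y₀, hyle⟩ := hBR
  have hy₀ne : y₀ ≠ c := by
    rintro rfl
    have h1 := μR.toHome_of_toChild h₀y₀
    obtain rfl : h' = h₀ := Option.some.inj (hR.symm.trans h1)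
    exact lt_irrefl _ hcon
  have hVlt : M.V h₀ c < M.V h₀ y₀ :=
    lt_of_le_of_ne hyle (strictV h₀ c y₀ (Ne.symm hy₀ne))
  have h₀Hs : h₀ ∈ Hs := ⟨h₀RH, c, y₀, μM.toChild_of_toHome hM, hc, h₀y₀, hVlt⟩
  have hcD : c ∈ D := ⟨h₀, h₀Hs, μM.toChild_of_toHome hM⟩
  obtain ⟨h'', hRh'', hle⟩ := Ropt μ2 St2 c h₀ (by rw [hμ2Home_mem c hcD]; exact hM)
  obtain rfl : h' = h'' := Option.some.inj (hR.symm.trans hRh'')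
  exact absurd hle (not_le.mpr hcon)

end Market

/-- Theorem 3 (justified envy-freeness, incl. Remark 2): in any period of CRDA
(on active sets `aC`, `aH`, with `prev` recording homes' most recently rejected
placement values), there is no matched child `c` and home `h` (matched or unmatched,
with unmatched utility 0) with justified envy. -/
theorem crda_justifiedEnvyFree {C H : Type} [Finite C] [Finite H] (M : Market C H)
    (aC : Set C) (aH : Set H) (prev : H → Option ℝ) (t : ℕ)
    (S : Market.CRDAStep M aC aH prev t)
    (strictU : ∀ c h h', h ≠ h' → M.U c h ≠ M.U c h')
    (strictV : ∀ h c c', c ≠ c' → M.V h c ≠ M.V h c')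
    (c : C) (h : H) (hc : c ∈ aC) (hh : h ∈ aH) (h' : H)
    (hmc : S.μ.toHome c = some h') :
    ¬ (M.U c h' < M.U c h ∧ (S.μ.toChild h).elim (0 : ℝ) (M.V h) < M.V h c) := by
  classical
  have SM := S.matching_opt.1
  by_cases T : M.crdaTrigger prev t S.μM
  · -- trigger case
    have SR := (S.rot_opt T).1
    have hRCsub : M.crdaRC aC aH prev t S.μM ⊆ aC := fun c' hc' => hc'.1.1
    have hRHsub : M.crdaRH aC aH prev t S.μM ⊆ aH := fun h'' hh'' => hh''.1
    have hcl : ∀ c' g, c' ∈ M.crdaRC aC aH prev t S.μM → S.μM.toHome c' = some g →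
        g ∈ M.crdaRH aC aH prev t S.μM := by
      intro c' g hc' hg
      exact ⟨(SM.1 c' g hg).2.1, Or.inl ⟨c', hc'.1, S.μM.toChild_of_toHome hg⟩⟩
    by_cases hcHat : c ∈ M.crdaHatRC aC aH prev t S.μM
    · by_cases hcRC : c ∈ M.crdaRC aC aH prev t S.μM
      · -- c is rotated
        have hmc' : S.μR.toHome c = some h' := by
          rw [← S.final_rotC T c hcRC]; exact hmc
        by_cases hhRH : h ∈ M.crdaRH aC aH prev t S.μM
        · rw [S.final_rotH T h hhRH]
          exact M.stable_no_envy SR hcRC hhRH hmc'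
        · rw [S.final_keepH T h hh hhRH]
          rintro ⟨hU, hV⟩
          obtain ⟨c₀, hc₀⟩ : ∃ c₀, S.μM.toChild h = some c₀ := by
            cases hn : S.μM.toChild h with
            | some c₀ => exact ⟨c₀, rfl⟩
            | none => exact absurd ⟨hh, Or.inr hn⟩ hhRH
          rw [hc₀] at hV
          simp only [Option.elim_some] at hV
          have hIRc₀ := SM.1 c₀ h (S.μM.toHome_of_toChild hc₀)
          have hV0 : 0 ≤ M.V h c := le_of_lt (lt_of_le_of_lt hIRc₀.2.2.2 hV)
          have hU0 : 0 ≤ M.U c h := le_of_lt (lt_of_le_of_lt (SR.1 c h' hmc').2.2.1 hU)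
          cases hMc : S.μM.toHome c with
          | none =>
            refine SM.2 c h hc hh hU0 hV0 ⟨?_, ?_⟩
            · intro h'' hh''
              rw [hMc] at hh''
              exact absurd hh'' (by simp)
            · intro c'' hc''
              obtain rfl : c₀ = c'' := Option.some.inj (hc₀.symm.trans hc'')
              exact hV
          | some h₀ =>
            have hkey : M.U c h₀ ≤ M.U c h' :=
              M.rotation_improves hRCsub hRHsub hcl SM (S.rot_opt T) strictU strictV
                hcRC hMc hmc'
            refine SM.2 c h hc hh hU0 hV0 ⟨?_, ?_⟩
            · intro h'' hh''
              obtain rfl : h₀ = h'' := Option.some.inj (hMc.symm.trans hh'')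
              exact lt_of_le_of_lt hkey hU
            · intro c'' hc''
              obtain rfl : c₀ = c'' := Option.some.inj (hc₀.symm.trans hc'')
              exact hV
      · -- c is dropped: contradiction with being matched
        rw [S.final_dropC T c hcHat hcRC] at hmc
        exact absurd hmc (by simp)
    · -- c keeps its MATCHING placement
      have hmc' : S.μM.toHome c = some h' := by
        rw [← S.final_keepC T c hc hcHat]; exact hmc
      rintro ⟨hU, hV⟩
      have hV0 : 0 ≤ M.V h c := by
        by_cases hhRH : h ∈ M.crdaRH aC aH prev t S.μM
        · rw [S.final_rotH T h hhRH] at hV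
          cases hn : S.μR.toChild h with
          | none => rw [hn] at hV; exact le_of_lt hV
          | some c'' =>
            rw [hn] at hV
            simp only [Option.elim_some] at hV
            exact le_of_lt (lt_of_le_of_lt
              (SR.1 c'' h (S.μR.toHome_of_toChild hn)).2.2.2 hV)
        · rw [S.final_keepH T h hh hhRH] at hV
          cases hn : S.μM.toChild h with
          | none => rw [hn] at hV; exact le_of_lt hV
          | some c'' =>
            rw [hn] at hV
            simp only [Option.elim_some] at hV
            exact le_of_lt (lt_of_le_of_lt
              (SM.1 c'' h (S.μM.toHome_of_toChild hn)).2.2.2 hV)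
      refine hcHat ⟨hc, Or.inl (Or.inl ⟨h, hh, hV0, ?_⟩)⟩
      intro h'' hh''
      obtain rfl : h' = h'' := Option.some.inj (hmc'.symm.trans hh'')
      exact hU
  · -- no trigger: the final matching is the MATCHING phase output
    rw [S.no_trigger T] at hmc ⊢
    exact M.stable_no_envy SM hc hh hmc
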